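/- Let y = K x† for some x† ∈ H, and assume K_n restricted to E_n is injective with smallest singular value μ_n > 0. With x_n^{III} = x_n° + U Λ L_n^†(y − y_n°), one has the error decomposition x_n^{III} − x† = (I − P_{E_n})(x_n° − x†) + d_n, where d_n = K_n^† r_n and r_n = (K − K_n)(x† − x_n°) + K x_n° − y_n°; consequently ‖d_n‖ ≤ (1/μ_n)(‖(K − K_n)(x_n° − x†)‖ + ‖y_n° − K x_n°‖). -/

import Mathlib

open scoped RealInnerProductSpace BigOperators

/-- Error estimate for Method III.  Let `y = K x†`, let `K_n† = U Λ L_n†` be the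
Moore–Penrose inverse of `K_n` (so `K_n† K_n = P_{E_n}` by injectivity of `K_n|_{E_n}`
and `‖K_n†‖ = 1/μ_n`).  With `x_n^{III} = x_n° + K_n†(y − y_n°)` one has
`x_n^{III} − x† = (I − P_{E_n})(x_n° − x†) + d_n`, where `d_n = K_n† r_n` and
`r_n = (K − K_n)(x† − x_n°) + K x_n° − y_n°`, and consequently
`‖d_n‖ ≤ (1/μ_n)(‖(K − K_n)(x_n° − x†)‖ + ‖y_n° − K x_n°‖)`. -/
theorem stmt8 {H G : Type*} [NormedAddCommGroup H] [InnerProductSpace ℝ H]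
    [CompleteSpace H] [NormedAddCommGroup G] [InnerProductSpace ℝ G]
    (K Kn : H →L[ℝ] G) (En : Submodule ℝ H) [FiniteDimensional ℝ En]
    (Kndag : G →L[ℝ] H) (μ : ℝ) (hμ : 0 < μ)
    (hproj : ∀ h : H, Kndag (Kn h) = (Submodule.orthogonalProjection En h : H))
    (hnorm : ‖Kndag‖ = 1 / μ)
    (xdag xm : H) (ym y : G) (hy : y = K xdag) :
    ((xm + Kndag (y - ym)) - xdag
        = ((xm - xdag) - (Submodule.orthogonalProjection En (xm - xdag) : H))
          + Kndag ((K - Kn) (xdag - xm) + K xm - ym))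
    ∧ ‖Kndag ((K - Kn) (xdag - xm) + K xm - ym)‖
        ≤ (1 / μ) * (‖(K - Kn) (xm - xdag)‖ + ‖ym - K xm‖) := by
  constructor
  · have key : y - ym = ((K - Kn) (xdag - xm) + K xm - ym) + Kn (xdag - xm) := by
      simp [hy, ContinuousLinearMap.sub_apply, map_sub]; abel
    have hP : (Submodule.orthogonalProjection En (xdag - xm) : H)
        = - (Submodule.orthogonalProjection En (xm - xdag) : H) := by
      have : (xdag - xm) = -(xm - xdag) := by abel
      rw [this, map_neg]; simp
    rw [key, map_add, hproj, hP]
    abel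
  · calc ‖Kndag ((K - Kn) (xdag - xm) + K xm - ym)‖
        ≤ ‖Kndag‖ * ‖(K - Kn) (xdag - xm) + K xm - ym‖ := Kndag.le_opNorm _
      _ ≤ (1 / μ) * (‖(K - Kn) (xm - xdag)‖ + ‖ym - K xm‖) := by
          rw [hnorm]
          apply mul_le_mul_of_nonneg_left _ (by positivity)
          have h1 : (K - Kn) (xdag - xm) + K xm - ym
              = -((K - Kn) (xm - xdag)) + -(ym - K xm) := by
            simp [ContinuousLinearMap.sub_apply, map_sub]; abel
          rw [h1]
          calc ‖-((K - Kn) (xm - xdag)) + -(ym - K xm)‖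
              ≤ ‖-((K - Kn) (xm - xdag))‖ + ‖-(ym - K xm)‖ := norm_add_le _ _
            _ = ‖(K - Kn) (xm - xdag)‖ + ‖ym - K xm‖ := by rw [norm_neg, norm_neg]
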